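/- Let T be a discrete valuation ring with maximal ideal 𝔭, and let γ be an element of finite order m in GL(M) for M a free T-module of finite rank, where m is not divisible by the residue characteristic (i.e., m is a unit-preserving order: m ∉ 𝔭 as an integer). If all eigenvalues of γ (in a suitable extension) are congruent to 1 modulo 𝔭, then γ = 1. In particular, if λ is a root of unity of order dividing m with λ ≡ 1 mod 𝔭 and m ∉ 𝔭, then λ = 1. -/

import Mathlib

open Polynomial IsLocalRing

/-- In a local domain, if `μ ^ m = 1`, `μ ≡ 1` mod the maximal ideal and `m` is a unit,
then `μ = 1`. -/
lemma aux_scalar {O : Type*} [CommRing O] [IsDomain O] [IsLocalRing O] {m : ℕ}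
    (hm : IsUnit (m : O)) {μ : O} (h1 : μ ^ m = 1) (h2 : μ - 1 ∈ maximalIdeal O) : μ = 1 := by
  have hg : (∑ i ∈ Finset.range m, μ ^ i) * (μ - 1) = 0 := by
    rw [geom_sum_mul, h1, sub_self]
  rcases mul_eq_zero.mp hg with h | h
  · exfalso
    have hres : residue O μ = 1 := by
      have := (Ideal.Quotient.mk_eq_mk_iff_sub_mem (I := maximalIdeal O) μ 1).mpr h2
      exact this
    have : (m : ResidueField O) = 0 := by
      have := congrArg (residue O) h
      simpa [map_sum, map_pow, hres] using this
    exact (hm.map (residue O)).ne_zero (by simpa using this)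
  · exact sub_eq_zero.mp h

/-- Evaluating the characteristic polynomial. -/
lemma aux_eval_charpoly {O : Type*} [CommRing O] {n : ℕ} (A : Matrix (Fin n) (Fin n) O)
    (r : O) : A.charpoly.eval r = (r • (1 : Matrix (Fin n) (Fin n) O) - A).det := by
  rw [Matrix.charpoly, ← Polynomial.coe_evalRingHom, RingHom.map_det]
  congr 1
  ext i j
  by_cases h : i = j <;>
    simp [Matrix.map_apply, Matrix.charmatrix_apply, Matrix.one_apply, h,
      Matrix.diagonal_apply]

/-- Let `T` be a DVR with maximal ideal `𝔭`, and `γ` an invertible matrix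
(element of `GL(M)`, `M` free of finite rank) with `γ^m = 1` where `m ∉ 𝔭` (as an element
of `T`).  If all eigenvalues of `γ` in a suitable extension (a local domain `O` over `T`
in which the characteristic polynomial of `γ` splits) are congruent to `1` modulo the
maximal ideal, then `γ = 1`.  In particular, a root of unity `λ` of order dividing `m`
with `λ ≡ 1 mod 𝔭` equals `1`. -/
theorem eigenvalues_cong_one_implies_id
    {T : Type*} [CommRing T] [IsDomain T] [IsDiscreteValuationRing T]
    {O : Type*} [CommRing O] [IsDomain O] [IsLocalRing O]
    (f : T →+* O) (hf : Function.Injective f)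
    (hloc : ∀ t : T, t ∈ maximalIdeal T → f t ∈ maximalIdeal O)
    {n : ℕ} (γ : Matrix (Fin n) (Fin n) T) (m : ℕ) (hγm : γ ^ m = 1)
    (hm : (m : T) ∉ maximalIdeal T)
    (lam : Fin n → O)
    (hchar : (γ.map f).charpoly = ∏ i, (X - C (lam i)))
    (hlam : ∀ i, lam i - 1 ∈ maximalIdeal O) :
    γ = 1 ∧ ∀ μ : T, μ ^ m = 1 → μ - 1 ∈ maximalIdeal T → μ = 1 := by
  -- `m` is a unit in `T`
  have hmT : IsUnit (m : T) := by
    by_contra h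
    exact hm (IsLocalRing.mem_maximalIdeal _ |>.mpr h)
  -- hence in `O`
  have hmO : IsUnit (m : O) := by
    have := hmT.map f
    rwa [map_natCast] at this
  set A : Matrix (Fin n) (Fin n) O := γ.map f with hA
  have hAm : A ^ m = 1 := by
    have : A = f.mapMatrix γ := rfl
    rw [this, ← map_pow, hγm, map_one]
  -- every eigenvalue satisfies `lam j ^ m = 1`
  have hlm : ∀ j, lam j ^ m = 1 := by
    intro j
    have hdet : (lam j • (1 : Matrix (Fin n) (Fin n) O) - A).det = 0 := by
      rw [← aux_eval_charpoly, hchar]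
      rw [Polynomial.eval_prod]
      exact Finset.prod_eq_zero (Finset.mem_univ j) (by simp)
    obtain ⟨v, hv, hveq⟩ := Matrix.exists_mulVec_eq_zero_iff.mpr hdet
    have hAv : A.mulVec v = lam j • v := by
      have := hveq
      rw [Matrix.sub_mulVec] at this
      have h1 : (lam j • (1 : Matrix (Fin n) (Fin n) O)).mulVec v = lam j • v := by
        rw [Matrix.smul_mulVec, Matrix.one_mulVec]
      rw [h1, sub_eq_zero] at this
      exact this.symm
    have hk : ∀ k : ℕ, (A ^ k).mulVec v = lam j ^ k • v := by
      intro k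
      induction k with
      | zero => simp [Matrix.one_mulVec]
      | succ k ih =>
        rw [pow_succ', ← Matrix.mulVec_mulVec, ih, Matrix.mulVec_smul, hAv,
          smul_smul, pow_succ']
        rw [mul_comm]
    have := hk m
    rw [hAm, Matrix.one_mulVec] at this
    obtain ⟨i, hi⟩ := Function.ne_iff.mp hv
    have : v i = lam j ^ m * v i := by
      have := congrFun this i
      simpa using this
    have : (lam j ^ m - 1) * v i = 0 := by linear_combination -this
    rcases mul_eq_zero.mp this with h | h
    · exact sub_eq_zero.mp h
    · exact absurd h hi
  -- every eigenvalue equals 1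
  have hl1 : ∀ j, lam j = 1 := fun j => aux_scalar hmO (hlm j) (hlam j)
  -- `A - 1` is nilpotent
  set N : Matrix (Fin n) (Fin n) O := A - 1 with hN
  have hNn : N ^ n = 0 := by
    have hch : A.charpoly = (X - 1 : O[X]) ^ n := by
      rw [hchar]
      simp [hl1, Finset.prod_const]
    have := Matrix.aeval_self_charpoly A
    rw [hch] at this
    simpa [map_pow, map_sub, aeval_X, map_one] using this
  have hNnil : IsNilpotent N := ⟨n, hNn⟩
  -- binomial expansion of `A ^ m = (N + 1) ^ m`
  have hbin : (1 : Matrix (Fin n) (Fin n) O) =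
      ∑ k ∈ Finset.range (m + 1), N ^ k * (m.choose k : Matrix (Fin n) (Fin n) O) := by
    have hcom : Commute N (1 : Matrix (Fin n) (Fin n) O) := Commute.one_right N
    have := hcom.add_pow m
    rw [show N + 1 = A by rw [hN, sub_add_cancel], hAm] at this
    simpa using this
  have hm1 : 1 ≤ m := by
    rcases Nat.eq_zero_or_pos m with h | h
    · exfalso; apply hm; rw [h]; simpa using (maximalIdeal T).zero_mem
    · exact h
  -- extract the constant term
  have hsum : N * (∑ k ∈ Finset.range m, N ^ k * (m.choose (k + 1) : Matrix (Fin n) (Fin n) O))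
      = 0 := by
    have := hbin
    rw [Finset.sum_range_succ'] at this
    simp only [pow_zero, one_mul, Nat.choose_zero_right, Nat.cast_one, mul_one] at this
    have h0 : ∑ k ∈ Finset.range m, N ^ (k + 1) * (m.choose (k + 1) :
        Matrix (Fin n) (Fin n) O) = 0 := add_eq_right.mp this.symm
    rw [Finset.mul_sum]
    rw [← h0]
    apply Finset.sum_congr rfl
    intro k _
    rw [← mul_assoc, ← pow_succ']
  -- the second factor is a unit
  set S : Matrix (Fin n) (Fin n) O :=
    ∑ k ∈ Finset.range m, N ^ k * (m.choose (k + 1) : Matrix (Fin n) (Fin n) O) with hS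
  have hSunit : IsUnit S := by
    obtain ⟨m', hm'⟩ : ∃ m', m = m' + 1 := ⟨m - 1, by omega⟩
    have hSsplit : S = (∑ k ∈ Finset.range m', N ^ (k + 1) *
        (m.choose (k + 2) : Matrix (Fin n) (Fin n) O)) + (m : Matrix (Fin n) (Fin n) O) := by
      rw [hS, hm', Finset.sum_range_succ']
      simp [Nat.choose_one_right]
    set B : Matrix (Fin n) (Fin n) O := ∑ k ∈ Finset.range m', N ^ (k + 1) *
        (m.choose (k + 2) : Matrix (Fin n) (Fin n) O) with hB
    have hBnil : IsNilpotent B := by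
      have : B = N * ∑ k ∈ Finset.range m', N ^ k *
          (m.choose (k + 2) : Matrix (Fin n) (Fin n) O) := by
        rw [hB, Finset.mul_sum]
        exact Finset.sum_congr rfl fun k _ => by rw [← mul_assoc, ← pow_succ']
      rw [this]
      have hcomm : Commute N (∑ k ∈ Finset.range m', N ^ k *
          (m.choose (k + 2) : Matrix (Fin n) (Fin n) O)) := by
        apply Commute.sum_right
        intro k _
        exact ((Commute.refl N).pow_right k).mul_right (Nat.commute_cast N _)
      exact hcomm.isNilpotent_mul_right hNnil
    have hmMat : IsUnit ((m : ℕ) : Matrix (Fin n) (Fin n) O) := by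
      have := hmO.map (algebraMap O (Matrix (Fin n) (Fin n) O))
      rwa [map_natCast] at this
    rw [hSsplit]
    exact add_comm (↑m) B ▸ hBnil.isUnit_add_left_of_commute hmMat (Nat.commute_cast B m)
  -- conclude `N = 0`, hence `A = 1`
  have hN0 : N = 0 := by
    obtain ⟨u, hu⟩ := hSunit
    rw [← hu] at hsum
    calc N = N * (↑u * ↑u⁻¹) := by rw [Units.mul_inv, mul_one]
    _ = N * ↑u * ↑u⁻¹ := by rw [mul_assoc]
    _ = 0 := by rw [hsum, zero_mul]
  have hA1 : A = 1 := by
    have h : A - 1 = 0 := hN0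
    rwa [sub_eq_zero] at h
  constructor
  · ext i j
    apply hf
    have := congrFun (congrFun hA1 i) j
    rw [hA, Matrix.map_apply] at this
    rw [this, Matrix.one_apply, Matrix.one_apply]
    split_ifs <;> simp
  · intro μ h1 h2
    exact aux_scalar hmT h1 h2
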